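/- Let A ∈ ℝ^{m×n}, b ∈ ℝᵐ, v ∈ ℝⁿ with v ≥ 0, β > 0, λ > 0 and x̄ ∈ ℝⁿ, and define Φ(y) = bᵀy + (1/(2β))‖y‖² + (1/(2λ))‖S_λ(x̄ − λAᵀy, v)‖², where S_λ(z, v)ᵢ = sign(zᵢ)·max{|zᵢ| − λvᵢ, 0}. If ŷ ∈ ℝᵐ satisfies b + β⁻¹ŷ − A·S_λ(x̄ − λAᵀŷ, v) = 0, then the pair (û, x̂) with û = −β⁻¹ŷ and x̂ = S_λ(x̄ − λAᵀŷ, v) is the unique optimal solution of the problem min { ⟨v, |x|⟩ + (β/2)‖u‖² + (1/(2λ))‖x − x̄‖² : Ax + u = b } over (u, x) ∈ ℝᵐ × ℝⁿ. -/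

import Mathlib

/-- The componentwise soft-thresholding operator
`S_λ(z, v)ᵢ = sign(zᵢ) · max{|zᵢ| − λvᵢ, 0}`. -/
noncomputable def softThresh {n : ℕ} (lam : ℝ) (z v : Fin n → ℝ) : Fin n → ℝ :=
  fun i => Real.sign (z i) * max (|z i| - lam * v i) 0

/-- if `ŷ` satisfies `b + β⁻¹ŷ − A·S_λ(x̄ − λAᵀŷ, v) = 0`, then
`(û, x̂) = (−β⁻¹ŷ, S_λ(x̄ − λAᵀŷ, v))` is the unique optimal solution of
`min { ⟨v, |x|⟩ + (β/2)‖u‖² + (1/(2λ))‖x − x̄‖² : Ax + u = b }`. -/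

lemma st_sub (lam vi z : ℝ) (hlam : 0 < lam) (hv : 0 ≤ vi) :
    |z - Real.sign z * max (|z| - lam * vi) 0| ≤ lam * vi ∧
    (z - Real.sign z * max (|z| - lam * vi) 0) * (Real.sign z * max (|z| - lam * vi) 0)
      = lam * vi * |Real.sign z * max (|z| - lam * vi) 0| := by
  have hlv : 0 ≤ lam * vi := mul_nonneg hlam.le hv
  rcases lt_trichotomy z 0 with hz | hz | hz
  · rw [Real.sign_of_neg hz, abs_of_neg hz]
    rcases le_or_gt (lam * vi) (-z) with h | h
    · have hmax : max (-z - lam * vi) 0 = -z - lam * vi := max_eq_left (by linarith)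
      rw [hmax]
      constructor
      · rw [show z - (-1) * (-z - lam * vi) = -(lam*vi) by ring, abs_neg, abs_of_nonneg hlv]
      · rw [show (-1:ℝ) * (-z - lam*vi) = z + lam*vi by ring, abs_of_nonpos (by linarith)]
        ring
    · have hmax : max (-z - lam * vi) 0 = 0 := max_eq_right (by linarith)
      rw [hmax]
      constructor
      · rw [show z - (-1) * 0 = -(-z) by ring, abs_neg, abs_of_nonneg (by linarith)]
        linarith
      · simp
  · subst hz
    simp
    exact hlv
  · rw [Real.sign_of_pos hz, abs_of_pos hz]
    rcases le_or_gt (lam * vi) z with h | h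
    · have hmax : max (z - lam * vi) 0 = z - lam * vi := max_eq_left (by linarith)
      rw [hmax]
      constructor
      · rw [show z - 1 * (z - lam * vi) = lam*vi by ring, abs_of_nonneg hlv]
      · rw [show (1:ℝ) * (z - lam*vi) = z - lam*vi by ring, abs_of_nonneg (by linarith)]
        ring
    · have hmax : max (z - lam * vi) 0 = 0 := max_eq_right (by linarith)
      rw [hmax]
      constructor
      · rw [show z - 1 * 0 = z by ring, abs_of_pos hz]
        linarith
      · simp

lemma st_prox (lam vi z x : ℝ) (hlam : 0 < lam) (hv : 0 ≤ vi) :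
    2*lam*(vi * |Real.sign z * max (|z| - lam * vi) 0|)
      + (Real.sign z * max (|z| - lam * vi) 0 - z)^2
      + (x - Real.sign z * max (|z| - lam * vi) 0)^2
    ≤ 2*lam*(vi * |x|) + (x - z)^2 := by
  obtain ⟨h1, h2⟩ := st_sub lam vi z hlam hv
  set s := Real.sign z * max (|z| - lam * vi) 0 with hs
  have h3 : (z - s) * x ≤ lam * vi * |x| := by
    calc (z - s) * x ≤ |(z - s) * x| := le_abs_self _
    _ = |z - s| * |x| := abs_mul _ _
    _ ≤ lam * vi * |x| := mul_le_mul_of_nonneg_right h1 (abs_nonneg x)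
  nlinarith [h2, h3]

theorem dual_root_gives_unique_primal_solution {m n : ℕ} (A : Matrix (Fin m) (Fin n) ℝ)
    (b : Fin m → ℝ) (v : Fin n → ℝ) (hv : ∀ i, 0 ≤ v i)
    (β : ℝ) (hβ : 0 < β) (lam : ℝ) (hlam : 0 < lam) (xbar : Fin n → ℝ)
    (yhat : Fin m → ℝ)
    (hroot : (fun j => b j + β⁻¹ * yhat j -
      A.mulVec (softThresh lam (xbar - lam • A.transpose.mulVec yhat) v) j) = 0)
    (uhat : Fin m → ℝ) (huhat : uhat = fun j => -β⁻¹ * yhat j)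
    (xhat : Fin n → ℝ) (hxhat : xhat = softThresh lam (xbar - lam • A.transpose.mulVec yhat) v) :
    -- (û, x̂) is feasible
    (A.mulVec xhat + uhat = b) ∧
    -- (û, x̂) is optimal
    (∀ u : Fin m → ℝ, ∀ x : Fin n → ℝ, A.mulVec x + u = b →
      (∑ i, v i * |xhat i|) + (β / 2) * (∑ j, uhat j ^ 2) +
          (1 / (2 * lam)) * (∑ i, (xhat i - xbar i) ^ 2) ≤
        (∑ i, v i * |x i|) + (β / 2) * (∑ j, u j ^ 2) +
          (1 / (2 * lam)) * ∑ i, (x i - xbar i) ^ 2) ∧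
    -- (û, x̂) is the unique optimal solution
    (∀ u : Fin m → ℝ, ∀ x : Fin n → ℝ, A.mulVec x + u = b →
      (∑ i, v i * |x i|) + (β / 2) * (∑ j, u j ^ 2) +
          (1 / (2 * lam)) * (∑ i, (x i - xbar i) ^ 2) ≤
        (∑ i, v i * |xhat i|) + (β / 2) * (∑ j, uhat j ^ 2) +
          (1 / (2 * lam)) * (∑ i, (xhat i - xbar i) ^ 2) →
      u = uhat ∧ x = xhat) := by
  have hβ0 : β ≠ 0 := ne_of_gt hβ
  set w : Fin n → ℝ := A.transpose.mulVec yhat with hw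
  have hxi : ∀ i, xhat i = Real.sign (xbar i - lam * w i) * max (|xbar i - lam * w i| - lam * v i) 0 := by
    intro i
    rw [hxhat]
    simp [softThresh, Pi.sub_apply, Pi.smul_apply, smul_eq_mul]
  have hfeas : A.mulVec xhat + uhat = b := by
    funext j
    have h0 := congrFun hroot j
    rw [← hxhat] at h0
    simp only [Pi.zero_apply] at h0
    simp only [Pi.add_apply, huhat]
    linarith
  have hAxh : ∀ j, A.mulVec xhat j = b j - uhat j := by
    intro j
    have := congrFun hfeas j
    simp only [Pi.add_apply] at this
    linarith
  have main : ∀ u : Fin m → ℝ, ∀ x : Fin n → ℝ, A.mulVec x + u = b →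
      (∑ i, v i * |xhat i|) + (β / 2) * (∑ j, uhat j ^ 2) +
          (1 / (2 * lam)) * (∑ i, (xhat i - xbar i) ^ 2)
        + ((β / 2) * (∑ j, (u j - uhat j) ^ 2) + (1 / (2 * lam)) * (∑ i, (x i - xhat i) ^ 2))
      ≤ (∑ i, v i * |x i|) + (β / 2) * (∑ j, u j ^ 2) +
          (1 / (2 * lam)) * (∑ i, (x i - xbar i) ^ 2) := by
    intro u x hfx
    have hAx : ∀ j, A.mulVec x j = b j - u j := by
      intro j
      have := congrFun hfx j
      simp only [Pi.add_apply] at this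
      linarith
    -- summed per-coordinate prox inequality
    have A1 : ∑ i, (2*lam*(v i * |xhat i|) + (xhat i - xbar i)^2 + 2*lam*(w i * xhat i)
          + (x i - xhat i)^2)
        ≤ ∑ i, (2*lam*(v i * |x i|) + (x i - xbar i)^2 + 2*lam*(w i * x i)) := by
      apply Finset.sum_le_sum
      intro i _
      have h := st_prox lam (v i) (xbar i - lam * w i) (x i) hlam (hv i)
      rw [← hxi i] at h
      nlinarith [h]
    simp only [Finset.sum_add_distrib, ← Finset.mul_sum] at A1
    -- u-part identity
    have B1 : ∀ j ∈ Finset.univ, β * u j ^ 2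
        = β * uhat j ^ 2 + 2 * (yhat j * (uhat j - u j)) + β * (u j - uhat j) ^ 2 := by
      intro j _
      have hy : yhat j = -(β * uhat j) := by rw [huhat]; field_simp
      rw [hy]; ring
    have B2 := Finset.sum_congr rfl B1
    simp only [Finset.sum_add_distrib, ← Finset.mul_sum] at B2
    -- linking identity
    have C1 : (∑ i, w i * x i) - (∑ i, w i * xhat i) = ∑ j, yhat j * (uhat j - u j) := by
      have swap : ∑ i, w i * (x i - xhat i) = ∑ j, yhat j * (A.mulVec (x - xhat) j) := by
        have h := Matrix.dotProduct_mulVec yhat A (x - xhat)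
        rw [← Matrix.mulVec_transpose] at h
        simpa [dotProduct, hw, Pi.sub_apply] using h.symm
      have lh : (∑ i, w i * x i) - (∑ i, w i * xhat i) = ∑ i, w i * (x i - xhat i) := by
        rw [← Finset.sum_sub_distrib]
        exact Finset.sum_congr rfl fun i _ => by ring
      rw [lh, swap]
      refine Finset.sum_congr rfl fun j _ => ?_
      rw [Matrix.mulVec_sub, Pi.sub_apply, hAx j, hAxh j]
      ring
    have B3 := congrArg (fun t => lam * t) B2
    have C3 := congrArg (fun t => lam * t) C1
    have h2l : (0:ℝ) < 2 * lam := by linarith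
    rw [← sub_nonneg]
    have hexp : ((∑ i, v i * |x i|) + (β / 2) * (∑ j, u j ^ 2) +
          (1 / (2 * lam)) * (∑ i, (x i - xbar i) ^ 2)
        - ((∑ i, v i * |xhat i|) + (β / 2) * (∑ j, uhat j ^ 2) +
          (1 / (2 * lam)) * (∑ i, (xhat i - xbar i) ^ 2)
        + ((β / 2) * (∑ j, (u j - uhat j) ^ 2) + (1 / (2 * lam)) * (∑ i, (x i - xhat i) ^ 2)))) * (2*lam)
      = 2*lam*(∑ i, v i * |x i|) + lam*(β * (∑ j, u j ^ 2)) + (∑ i, (x i - xbar i) ^ 2)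
        - (2*lam*(∑ i, v i * |xhat i|) + lam*(β * (∑ j, uhat j ^ 2)) + (∑ i, (xhat i - xbar i) ^ 2)
          + lam*(β * (∑ j, (u j - uhat j) ^ 2)) + (∑ i, (x i - xhat i) ^ 2)) := by
      field_simp
      ring
    have hge : 0 ≤ ((∑ i, v i * |x i|) + (β / 2) * (∑ j, u j ^ 2) +
          (1 / (2 * lam)) * (∑ i, (x i - xbar i) ^ 2)
        - ((∑ i, v i * |xhat i|) + (β / 2) * (∑ j, uhat j ^ 2) +
          (1 / (2 * lam)) * (∑ i, (xhat i - xbar i) ^ 2)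
        + ((β / 2) * (∑ j, (u j - uhat j) ^ 2) + (1 / (2 * lam)) * (∑ i, (x i - xhat i) ^ 2)))) * (2*lam) := by
      rw [hexp]
      linarith [A1, B3, C3]
    nlinarith [hge, h2l]
  refine ⟨hfeas, ?_, ?_⟩
  · intro u x hux
    have hm := main u x hux
    have d1 : 0 ≤ ∑ j, (u j - uhat j) ^ 2 := Finset.sum_nonneg fun j _ => sq_nonneg _
    have d2 : 0 ≤ ∑ i, (x i - xhat i) ^ 2 := Finset.sum_nonneg fun i _ => sq_nonneg _
    have c1 : 0 ≤ (β / 2) * ∑ j, (u j - uhat j) ^ 2 := by positivity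
    have c2 : 0 ≤ (1 / (2 * lam)) * ∑ i, (x i - xhat i) ^ 2 := by positivity
    linarith
  · intro u x hux hle
    have hm := main u x hux
    have d1 : 0 ≤ ∑ j, (u j - uhat j) ^ 2 := Finset.sum_nonneg fun j _ => sq_nonneg _
    have d2 : 0 ≤ ∑ i, (x i - xhat i) ^ 2 := Finset.sum_nonneg fun i _ => sq_nonneg _
    have c1 : 0 ≤ (β / 2) * ∑ j, (u j - uhat j) ^ 2 := by positivity
    have c2 : 0 ≤ (1 / (2 * lam)) * ∑ i, (x i - xhat i) ^ 2 := by positivity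
    have hz : (β / 2) * (∑ j, (u j - uhat j) ^ 2) + (1 / (2 * lam)) * (∑ i, (x i - xhat i) ^ 2) ≤ 0 := by
      linarith
    have e1 : (β / 2) * (∑ j, (u j - uhat j) ^ 2) = 0 := le_antisymm (by linarith) c1
    have e2 : (1 / (2 * lam)) * (∑ i, (x i - xhat i) ^ 2) = 0 := le_antisymm (by linarith) c2
    have hb2 : (β / 2) ≠ 0 := by positivity
    have hl2 : (1 / (2 * lam)) ≠ 0 := by positivity
    have hDu : ∑ j, (u j - uhat j) ^ 2 = 0 := by
      rcases mul_eq_zero.mp e1 with h | h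
      · exact absurd h hb2
      · exact h
    have hDx : ∑ i, (x i - xhat i) ^ 2 = 0 := by
      rcases mul_eq_zero.mp e2 with h | h
      · exact absurd h hl2
      · exact h
    constructor
    · funext j
      have := (Finset.sum_eq_zero_iff_of_nonneg (fun j _ => sq_nonneg (u j - uhat j))).mp hDu j (Finset.mem_univ j)
      have h0 : u j - uhat j = 0 := by
        exact pow_eq_zero_iff (by norm_num) |>.mp this
      linarith
    · funext i
      have := (Finset.sum_eq_zero_iff_of_nonneg (fun i _ => sq_nonneg (x i - xhat i))).mp hDx i (Finset.mem_univ i)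
      have h0 : x i - xhat i = 0 := by
        exact pow_eq_zero_iff (by norm_num) |>.mp this
      linarith
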